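/- Fix δ ∈ (0,1), assume the uniform convergence assumption holds with constants C1, C2, and assume additionally that P_1 = P_2 = ⋯ = P_T (the i.i.d. case). Let r̂ = 2^ĵ, where ĵ is the least integer j ≥ 0 such that either 2^{j+1} > T or ‖𝔔_T^{2^j} − 𝔔_T^{2^{j+1}}‖_F > 4·S(2^j, δ). Then with probability at least 1 − δ, ‖P_T − 𝔔_T^{r̂}‖_F ≤ 462·S(T, δ). -/

import Mathlib

open MeasureTheory ProbabilityTheory

/-- The discrepancy `‖P − Q‖_F`. -/
noncomputable def dF {ι Z : Type*} [MeasurableSpace Z] (F : ι → Z → ℝ)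
    (P Q : Measure Z) : ℝ :=
  ⨆ n, |(∫ z, F n z ∂P) - ∫ z, F n z ∂Q|

/-- The average distribution `P_T^r = (1/r)·Σ_{t=T−r+1}^T P_t`. -/
noncomputable def avgMeas {Z : Type*} [MeasurableSpace Z]
    (P : ℕ → Measure Z) (T r : ℕ) : Measure Z :=
  (r : ENNReal)⁻¹ • ∑ t ∈ Finset.Icc (T - r + 1) T, P t

/-- Empirical average `(1/r)·Σ_{t=T−r+1}^T f(Z_t(ω))`. -/
noncomputable def empAvg {Z Ω : Type*} (Zs : ℕ → Ω → Z) (T r : ℕ)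
    (f : Z → ℝ) (ω : Ω) : ℝ :=
  (r : ℝ)⁻¹ * ∑ t ∈ Finset.Icc (T - r + 1) T, f (Zs t ω)

/-- `‖P − 𝔔_T^r(ω)‖_F`. -/
noncomputable def dPE {ι Z Ω : Type*} [MeasurableSpace Z] (F : ι → Z → ℝ)
    (P : Measure Z) (Zs : ℕ → Ω → Z) (T r : ℕ) (ω : Ω) : ℝ :=
  ⨆ n, |(∫ z, F n z ∂P) - empAvg Zs T r (F n) ω|

/-- `‖𝔔_T^r(ω) − 𝔔_T^s(ω)‖_F`. -/
noncomputable def dEE {ι Z Ω : Type*} (F : ι → Z → ℝ) (Zs : ℕ → Ω → Z)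
    (T r s : ℕ) (ω : Ω) : ℝ :=
  ⨆ n, |empAvg Zs T r (F n) ω - empAvg Zs T s (F n) ω|

/-- `S(r, δ)`. -/
noncomputable def Sfun (C1 C2 r δ : ℝ) : ℝ :=
  (C1 + C2 * Real.sqrt (2 * Real.log (Real.pi ^ 2 / (6 * δ)))) / Real.sqrt r
    + C2 * Real.sqrt (2 * Real.log (Real.logb 2 r + 10) / r)

/-- `max_{0 ≤ t ≤ r−1} ‖P_T − P_{T−t}‖_F`. -/
noncomputable def maxDrift {ι Z : Type*} [MeasurableSpace Z] (F : ι → Z → ℝ)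
    (P : ℕ → Measure Z) (T r : ℕ) : ℝ :=
  ⨆ t : Fin r, dF F (P T) (P (T - (t : ℕ)))

/-- The stopping condition of the adaptive algorithm at step `j`:
either the doubled window no longer fits the data, or the empirical
discrepancy between windows `2^j` and `2^{j+1}` exceeds `4·S(2^j, δ)`. -/
def stopCond {ι Z Ω : Type*} (F : ι → Z → ℝ) (Zs : ℕ → Ω → Z)
    (T : ℕ) (C1 C2 δ : ℝ) (j : ℕ) (ω : Ω) : Prop :=
  2 ^ (j + 1) > T ∨
    dEE F Zs T (2 ^ j) (2 ^ (j + 1)) ω > 4 * Sfun C1 C2 (2 ^ j : ℕ) δ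

lemma my_sqrt_add_le {a b : ℝ} (ha : 0 ≤ a) (hb : 0 ≤ b) :
    Real.sqrt (a + b) ≤ Real.sqrt a + Real.sqrt b := by
  rw [show a + b = (Real.sqrt a)^2 + (Real.sqrt b)^2 by rw [Real.sq_sqrt ha, Real.sq_sqrt hb]]
  have h1 := Real.sqrt_nonneg a
  have h2 := Real.sqrt_nonneg b
  nlinarith [Real.sq_sqrt (show (0:ℝ) ≤ (Real.sqrt a)^2 + (Real.sqrt b)^2 by positivity),
    Real.sqrt_nonneg ((Real.sqrt a)^2 + (Real.sqrt b)^2),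
    sq_nonneg (Real.sqrt ((Real.sqrt a)^2 + (Real.sqrt b)^2) - Real.sqrt a - Real.sqrt b)]

lemma Sfun_nonneg {C1 C2 : ℝ} (hC1 : 0 ≤ C1) (hC2 : 0 ≤ C2) (r δ : ℝ) :
    0 ≤ Sfun C1 C2 r δ := by
  unfold Sfun
  have := Real.sqrt_nonneg r
  positivity

lemma Sfun_pow_eq (C1 C2 δ : ℝ) (j : ℕ) :
    Sfun C1 C2 ((2^j : ℕ) : ℝ) δ =
      (C1 + C2 * Real.sqrt (2 * Real.log (Real.pi ^ 2 / (6 * δ)))) / Real.sqrt ((2:ℝ)^j)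
        + C2 * Real.sqrt (2 * Real.log ((j:ℝ) + 10) / (2:ℝ)^j) := by
  have : ((2^j : ℕ) : ℝ) = (2:ℝ)^j := by push_cast; ring
  rw [Sfun, this, Real.logb_pow, Real.logb_self_eq_one (by norm_num), mul_one]


lemma Sfun_pow_succ_le {C1 C2 : ℝ} (hC1 : 0 ≤ C1) (hC2 : 0 ≤ C2) (δ : ℝ) (j : ℕ) :
    Sfun C1 C2 ((2^(j+1) : ℕ) : ℝ) δ ≤ Sfun C1 C2 ((2^j : ℕ) : ℝ) δ := by
  rw [Sfun_pow_eq, Sfun_pow_eq]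
  have hp : (0:ℝ) < (2:ℝ)^j := by positivity
  have hsp : (0:ℝ) < Real.sqrt ((2:ℝ)^j) := Real.sqrt_pos.2 hp
  have hsp1 : (0:ℝ) < Real.sqrt ((2:ℝ)^(j+1)) := Real.sqrt_pos.2 (by positivity)
  have hN : 0 ≤ C1 + C2 * Real.sqrt (2 * Real.log (Real.pi ^ 2 / (6 * δ))) := by positivity
  refine add_le_add ?_ (mul_le_mul_of_nonneg_left (Real.sqrt_le_sqrt (by
      have hL2 : (0:ℝ) ≤ Real.log ((j:ℝ) + 10) := Real.log_nonneg (by have := Nat.cast_nonneg (α := ℝ) j; linarith)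
      have hlog : Real.log ((j:ℝ) + 1 + 10) ≤ 2 * Real.log ((j:ℝ) + 10) := by
        have h2 : Real.log ((j:ℝ) + 1 + 10) ≤ Real.log (((j:ℝ) + 10)^2) := by
          apply Real.log_le_log (by positivity)
          nlinarith [Nat.cast_nonneg (α := ℝ) j]
        rwa [Real.log_pow, Nat.cast_ofNat] at h2
      rw [pow_succ, div_le_div_iff₀ (by positivity) hp]
      push_cast
      nlinarith)) hC2)
  · exact div_le_div_of_nonneg_left hN hsp (Real.sqrt_le_sqrt (by rw [pow_succ]; nlinarith))

lemma Sfun_final {C1 C2 δ : ℝ} (hC1 : 0 ≤ C1) (hC2 : 0 ≤ C2) {T j : ℕ}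
    (hT : 1 ≤ T) (h1 : 2^j ≤ T) (h2 : T < 2^(j+1)) :
    Sfun C1 C2 ((2^j : ℕ) : ℝ) δ ≤ 462 * Sfun C1 C2 ((T : ℕ) : ℝ) δ := by
  rw [Sfun_pow_eq]
  have hp : (0:ℝ) < (2:ℝ)^j := by positivity
  have hT0 : (1:ℝ) ≤ (T:ℝ) := by exact_mod_cast hT
  have hT0' : (0:ℝ) < (T:ℝ) := by linarith
  have hpT : (2:ℝ)^j ≤ (T:ℝ) := by exact_mod_cast h1
  have hT2p : (T:ℝ) < 2*(2:ℝ)^j := by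
    have : (T:ℝ) < ((2^(j+1) : ℕ) : ℝ) := by exact_mod_cast h2
    rw [show ((2^(j+1) : ℕ) : ℝ) = 2*(2:ℝ)^j by push_cast; ring] at this
    exact this
  have hsp : (0:ℝ) < Real.sqrt ((2:ℝ)^j) := Real.sqrt_pos.2 hp
  have hsT : (0:ℝ) < Real.sqrt (T:ℝ) := Real.sqrt_pos.2 hT0'
  have hN : 0 ≤ C1 + C2 * Real.sqrt (2 * Real.log (Real.pi ^ 2 / (6 * δ))) := by positivity
  have hsqrt4 : Real.sqrt 4 = 2 := by
    rw [show (4:ℝ) = 2^2 by norm_num, Real.sqrt_sq (by norm_num)]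
  have hsle : Real.sqrt (T:ℝ) ≤ 2 * Real.sqrt ((2:ℝ)^j) := by
    have : Real.sqrt (T:ℝ) ≤ Real.sqrt (4*(2:ℝ)^j) := Real.sqrt_le_sqrt (by linarith)
    rwa [Real.sqrt_mul (by norm_num), hsqrt4] at this
  -- logb comparison
  have hjlogb : (j:ℝ) ≤ Real.logb 2 (T:ℝ) := by
    have := Real.logb_le_logb_of_le (b := 2) (by norm_num) hp hpT
    rwa [show ((2:ℝ)^j) = (2:ℝ)^(j:ℕ) from rfl, Real.logb_pow,
      Real.logb_self_eq_one (by norm_num), mul_one] at this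
  have hjc : (0:ℝ) ≤ (j:ℝ) := Nat.cast_nonneg j
  have hL : 0 ≤ Real.log ((j:ℝ) + 10) := Real.log_nonneg (by linarith)
  have hLL : Real.log ((j:ℝ) + 10) ≤ Real.log (Real.logb 2 (T:ℝ) + 10) :=
    Real.log_le_log (by linarith) (by linarith)
  have hL' : 0 ≤ Real.log (Real.logb 2 (T:ℝ) + 10) := le_trans hL hLL
  have p1 : (C1 + C2 * Real.sqrt (2 * Real.log (Real.pi ^ 2 / (6 * δ)))) / Real.sqrt ((2:ℝ)^j)
      ≤ 2 * ((C1 + C2 * Real.sqrt (2 * Real.log (Real.pi ^ 2 / (6 * δ)))) / Real.sqrt (T:ℝ)) := by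
    rw [mul_div_assoc'] at *
    rw [div_le_div_iff₀ hsp hsT]
    nlinarith
  have p2 : C2 * Real.sqrt (2 * Real.log ((j:ℝ) + 10) / (2:ℝ)^j)
      ≤ 2 * (C2 * Real.sqrt (2 * Real.log (Real.logb 2 (T:ℝ) + 10) / (T:ℝ))) := by
    have harg : 2 * Real.log ((j:ℝ) + 10) / (2:ℝ)^j
        ≤ 4 * (2 * Real.log (Real.logb 2 (T:ℝ) + 10) / (T:ℝ)) := by
      rw [div_le_iff₀ hp]
      have h1p : 4 * (2 * Real.log (Real.logb 2 (T:ℝ) + 10) / (T:ℝ)) * (2:ℝ)^j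
          = 8 * Real.log (Real.logb 2 (T:ℝ) + 10) * ((2:ℝ)^j / (T:ℝ)) := by ring
      rw [h1p]
      have h2p : (1:ℝ)/2 ≤ (2:ℝ)^j / (T:ℝ) := by
        rw [div_le_div_iff₀ (by norm_num) hT0']
        linarith
      nlinarith
    calc C2 * Real.sqrt (2 * Real.log ((j:ℝ) + 10) / (2:ℝ)^j)
        ≤ C2 * Real.sqrt (4 * (2 * Real.log (Real.logb 2 (T:ℝ) + 10) / (T:ℝ))) :=
          mul_le_mul_of_nonneg_left (Real.sqrt_le_sqrt harg) hC2
      _ = 2 * (C2 * Real.sqrt (2 * Real.log (Real.logb 2 (T:ℝ) + 10) / (T:ℝ))) := by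
          rw [Real.sqrt_mul (by norm_num), hsqrt4]; ring
  have hSnn : 0 ≤ Sfun C1 C2 ((T:ℕ) : ℝ) δ := Sfun_nonneg hC1 hC2 _ _
  have : Sfun C1 C2 ((2^j : ℕ) : ℝ) δ ≤ 2 * Sfun C1 C2 ((T:ℕ) : ℝ) δ := by
    rw [Sfun_pow_eq, Sfun]
    push_cast at p1 p2 ⊢
    linarith
  rw [Sfun_pow_eq] at this
  linarith

lemma sum_basel (K : ℕ) :
    ∑ j ∈ Finset.range K, (1:ℝ)/((j:ℝ)+1)^2 ≤ Real.pi^2/6 := by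
  have h := sum_le_hasSum (Finset.image (fun n => n+1) (Finset.range K))
    (fun i _ => by positivity) hasSum_zeta_two
  rw [Finset.sum_image (by intro a _ b _ hab; simp only at hab; omega)] at h
  refine le_trans (le_of_eq ?_) h
  refine Finset.sum_congr rfl fun j _ => ?_
  push_cast
  ring

lemma bddAbove_of_le {g : ℕ → ℝ} (c : ℝ) (h : ∀ n, g n ≤ c) : BddAbove (Set.range g) :=
  ⟨c, by rintro x ⟨n, rfl⟩; exact h n⟩


lemma abs_empAvg_le {Z Ω : Type*} (Zs : ℕ → Ω → Z) (T r : ℕ) (f : Z → ℝ) {B : ℝ}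
    (hB : 0 ≤ B) (hf : ∀ z, |f z| ≤ B) (ω : Ω) : |empAvg Zs T r f ω| ≤ B := by
  rcases Nat.eq_zero_or_pos r with h | h
  · subst h; simpa [empAvg] using hB
  · unfold empAvg
    rw [abs_mul, abs_inv, Nat.abs_cast]
    have hrpos : (0:ℝ) < (r:ℝ) := by exact_mod_cast h
    have h1 : |∑ t ∈ Finset.Icc (T - r + 1) T, f (Zs t ω)| ≤ (r:ℝ) * B := by
      calc |∑ t ∈ Finset.Icc (T - r + 1) T, f (Zs t ω)|
          ≤ ∑ t ∈ Finset.Icc (T - r + 1) T, |f (Zs t ω)| := Finset.abs_sum_le_sum_abs _ _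
        _ ≤ (Finset.Icc (T - r + 1) T).card • B :=
            Finset.sum_le_card_nsmul _ _ _ (fun t _ => hf _)
        _ = ((Finset.Icc (T - r + 1) T).card : ℝ) * B := by rw [nsmul_eq_mul]
        _ ≤ (r:ℝ) * B := by
            refine mul_le_mul_of_nonneg_right ?_ hB
            have : (Finset.Icc (T - r + 1) T).card ≤ r := by rw [Nat.card_Icc]; omega
            exact_mod_cast this
    calc ((r:ℝ))⁻¹ * |∑ t ∈ Finset.Icc (T - r + 1) T, f (Zs t ω)|
        ≤ ((r:ℝ))⁻¹ * ((r:ℝ) * B) :=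
          mul_le_mul_of_nonneg_left h1 (by positivity)
      _ = B := by field_simp

lemma abs_integral_le_of_prob {Z : Type*} [MeasurableSpace Z] (P : Measure Z)
    [IsProbabilityMeasure P] (f : Z → ℝ) {B : ℝ} (hf : ∀ z, |f z| ≤ B) :
    |∫ z, f z ∂P| ≤ B := by
  have h := MeasureTheory.norm_integral_le_of_norm_le_const (μ := P) (f := f) (C := B)
    (Filter.Eventually.of_forall (fun z => by simpa using hf z))
  simpa [Real.norm_eq_abs, measure_univ] using h

/-- The per-scale failure probability `δ'_j = 6δ/(π²(j+1)²)`. -/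
noncomputable def delf (δ : ℝ) (j : ℕ) : ℝ := 6*δ/(Real.pi^2*((j:ℝ)+1)^2)

lemma delf_pos {δ : ℝ} (hδ0 : 0 < δ) (j : ℕ) : 0 < delf δ j := by
  have hj := Nat.cast_nonneg (α := ℝ) j
  have hπ2 : (0:ℝ) < Real.pi^2 := by nlinarith [Real.pi_gt_three]
  exact div_pos (by linarith) (mul_pos hπ2 (by positivity))

lemma delf_lt_one {δ : ℝ} (hδ0 : 0 < δ) (hδ1 : δ < 1) (j : ℕ) : delf δ j < 1 := by
  have hj := Nat.cast_nonneg (α := ℝ) j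
  have hπ2 : (0:ℝ) < Real.pi^2 := by nlinarith [Real.pi_gt_three]
  rw [delf, div_lt_one (mul_pos hπ2 (by positivity))]
  have h9 : (9:ℝ) ≤ Real.pi^2 := by nlinarith [Real.pi_gt_three]
  have h1 : (1:ℝ) ≤ ((j:ℝ)+1)^2 := by nlinarith
  nlinarith [mul_le_mul h9 h1 (by norm_num : (0:ℝ) ≤ 1) (by linarith : (0:ℝ) ≤ Real.pi^2)]

/-- The uniform-convergence bound at scale `2^j` with failure probability `δ'_j`. -/
noncomputable def bfun (C1 C2 δ : ℝ) (j : ℕ) : ℝ :=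
  C1 / Real.sqrt ((2^j : ℕ) : ℝ)
    + C2 * Real.sqrt (Real.log (1 / delf δ j) / ((2^j : ℕ) : ℝ))

lemma bfun_le_Sfun {C1 C2 δ : ℝ} (hC2 : 0 ≤ C2) (hδ0 : 0 < δ) (hδ1 : δ < 1)
    (j : ℕ) : bfun C1 C2 δ j ≤ Sfun C1 C2 ((2^j : ℕ) : ℝ) δ := by
  have hπ := Real.pi_gt_three
  have hp : (0:ℝ) < (2:ℝ)^j := by positivity
  have hsp : (0:ℝ) < Real.sqrt ((2:ℝ)^j) := Real.sqrt_pos.2 hp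
  have hjc : (0:ℝ) ≤ (j:ℝ) := Nat.cast_nonneg j
  have hc : ((2^j : ℕ) : ℝ) = (2:ℝ)^j := by push_cast; ring
  rw [Sfun_pow_eq, bfun, delf, hc]
  set A := Real.log (Real.pi^2/(6*δ)) with hA
  have hA0 : 0 ≤ A := Real.log_nonneg (by rw [le_div_iff₀ (by positivity)]; nlinarith)
  have hlj : 0 ≤ Real.log ((j:ℝ)+1) := Real.log_nonneg (by linarith)
  have hlj' : 0 ≤ Real.log ((j:ℝ)+10) := Real.log_nonneg (by linarith)
  have hlogeq : Real.log (1 / (6*δ/(Real.pi^2*((j:ℝ)+1)^2))) = A + 2*Real.log ((j:ℝ)+1) := by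
    have e : 1 / (6*δ/(Real.pi^2*((j:ℝ)+1)^2)) = (Real.pi^2/(6*δ)) * ((j:ℝ)+1)^2 := by
      field_simp
    rw [e, Real.log_mul (by positivity) (by positivity), hA]
    have e2 : Real.log (((j:ℝ)+1)^2) = 2*Real.log ((j:ℝ)+1) := by
      rw [Real.log_pow]; push_cast; ring
    rw [e2]
  rw [hlogeq]
  have key : Real.sqrt ((A + 2*Real.log ((j:ℝ)+1)) / (2:ℝ)^j)
      ≤ Real.sqrt (2*A)/Real.sqrt ((2:ℝ)^j) + Real.sqrt (2*Real.log ((j:ℝ)+10)/(2:ℝ)^j) := by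
    calc Real.sqrt ((A + 2*Real.log ((j:ℝ)+1)) / (2:ℝ)^j)
        = Real.sqrt (A/(2:ℝ)^j + 2*Real.log ((j:ℝ)+1)/(2:ℝ)^j) := by rw [add_div]
      _ ≤ Real.sqrt (A/(2:ℝ)^j) + Real.sqrt (2*Real.log ((j:ℝ)+1)/(2:ℝ)^j) :=
          my_sqrt_add_le (by positivity) (by positivity)
      _ ≤ Real.sqrt (2*A)/Real.sqrt ((2:ℝ)^j) + Real.sqrt (2*Real.log ((j:ℝ)+10)/(2:ℝ)^j) := by
          refine add_le_add ?_ (Real.sqrt_le_sqrt ?_)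
          · rw [← Real.sqrt_div (by positivity)]
            exact Real.sqrt_le_sqrt (by rw [div_le_div_iff₀ hp hp]; nlinarith)
          · rw [div_le_div_iff₀ hp hp]
            have : Real.log ((j:ℝ)+1) ≤ Real.log ((j:ℝ)+10) :=
              Real.log_le_log (by linarith) (by linarith)
            nlinarith
  calc C1/Real.sqrt ((2:ℝ)^j) + C2 * Real.sqrt ((A + 2*Real.log ((j:ℝ)+1)) / (2:ℝ)^j)
      ≤ C1/Real.sqrt ((2:ℝ)^j)
        + C2 * (Real.sqrt (2*A)/Real.sqrt ((2:ℝ)^j) + Real.sqrt (2*Real.log ((j:ℝ)+10)/(2:ℝ)^j)) :=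
        add_le_add_right (mul_le_mul_of_nonneg_left key hC2) _
    _ = (C1 + C2 * Real.sqrt (2*A))/Real.sqrt ((2:ℝ)^j)
        + C2 * Real.sqrt (2*Real.log ((j:ℝ)+10)/(2:ℝ)^j) := by
        rw [add_div]; ring

/-- the i.i.d. case `P_1 = ⋯ = P_T`. If `ĵ(ω)` is the least `j` at which
the algorithm stops and `r̂ = 2^ĵ`, then with probability at least `1 − δ`,
`‖P_T − 𝔔_T^{r̂}‖_F ≤ 462·S(T, δ)`. -/
theorem stmt7 {Z Ω : Type*} [mZ : MeasurableSpace Z] [MeasurableSpace Ω]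
    (μ : Measure Ω) [IsProbabilityMeasure μ]
    (F : ℕ → Z → ℝ) (hFmeas : ∀ n, Measurable (F n))
    (B : ℝ) (hFbdd : ∀ n z, |F n z| ≤ B)
    (T : ℕ) (hT : 1 ≤ T) (P : ℕ → Measure Z)
    (hP : ∀ t, IsProbabilityMeasure (P t))
    (Zs : ℕ → Ω → Z) (hZmeas : ∀ t, Measurable (Zs t))
    (hindep : iIndepFun Zs μ)
    (hdist : ∀ t ∈ Finset.Icc 1 T, μ.map (Zs t) = P t)
    (C1 C2 : ℝ) (hC1 : 0 ≤ C1) (hC2 : 0 ≤ C2)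
    (hUC : ∀ r : ℕ, 1 ≤ r → r ≤ T → ∀ δ' : ℝ, 0 < δ' → δ' < 1 →
      ENNReal.ofReal (1 - δ') ≤ μ {ω | dPE F (avgMeas P T r) Zs T r ω ≤
        C1 / Real.sqrt r + C2 * Real.sqrt (Real.log (1 / δ') / r)})
    (δ : ℝ) (hδ0 : 0 < δ) (hδ1 : δ < 1)
    (hiid : ∀ s ∈ Finset.Icc 1 T, ∀ t ∈ Finset.Icc 1 T, P s = P t)
    (jhat : Ω → ℕ)
    (hjhat : ∀ ω, stopCond F Zs T C1 C2 δ (jhat ω) ω ∧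
      ∀ j < jhat ω, ¬ stopCond F Zs T C1 C2 δ j ω) :
    ENNReal.ofReal (1 - δ) ≤
      μ {ω | dPE F (P T) Zs T (2 ^ jhat ω) ω ≤ 462 * Sfun C1 C2 (T : ℕ) δ} := by
  classical
  have hΩ : Nonempty Ω := by
    by_contra h
    rw [not_nonempty_iff] at h
    have h1 : μ Set.univ = 1 := measure_univ
    rw [Set.univ_eq_empty_iff.mpr h] at h1
    simp at h1
  have hZne : Nonempty Z := ⟨Zs 0 hΩ.some⟩
  have hB : 0 ≤ B := le_trans (abs_nonneg _) (hFbdd 0 hZne.some)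
  haveI := hP T
  have hint : ∀ n, |∫ z, F n z ∂(P T)| ≤ B := fun n =>
    abs_integral_le_of_prob (P T) (F n) (hFbdd n)
  have hbddP : ∀ r (ω : Ω), BddAbove (Set.range fun n =>
      |(∫ z, F n z ∂(P T)) - empAvg Zs T r (F n) ω|) := fun r ω =>
    bddAbove_of_le (B + B) (fun n =>
      (abs_sub _ _).trans (add_le_add (hint n) (abs_empAvg_le Zs T r (F n) hB (hFbdd n) ω)))
  have havg : ∀ r : ℕ, 1 ≤ r → r ≤ T → avgMeas P T r = P T := by
    intro r h1 h2
    have hsub : ∀ t ∈ Finset.Icc (T - r + 1) T, P t = P T := by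
      intro t ht
      rw [Finset.mem_Icc] at ht
      exact hiid t (Finset.mem_Icc.2 ⟨by omega, ht.2⟩) T (Finset.mem_Icc.2 ⟨hT, le_refl T⟩)
    rw [avgMeas, Finset.sum_congr rfl hsub, Finset.sum_const, Nat.card_Icc,
      show T + 1 - (T - r + 1) = r by omega,
      ← Nat.cast_smul_eq_nsmul ENNReal, smul_smul,
      ENNReal.inv_mul_cancel (Nat.cast_ne_zero.2 (by omega))
        (ENNReal.natCast_ne_top r), one_smul]
  have hUC' : ∀ r : ℕ, 1 ≤ r → r ≤ T → ∀ δ' : ℝ, 0 < δ' → δ' < 1 →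
      ENNReal.ofReal (1 - δ') ≤ μ {ω | dPE F (P T) Zs T r ω ≤
        C1 / Real.sqrt r + C2 * Real.sqrt (Real.log (1 / δ') / r)} := by
    intro r h1 h2 δ' hd1 hd2
    have h := hUC r h1 h2 δ' hd1 hd2
    rwa [havg r h1 h2] at h
  set K := Nat.log 2 T with hK
  set Sset : ℕ → Set Ω :=
    fun j => {ω | dPE F (P T) Zs T (2^j) ω ≤ bfun C1 C2 δ j} with hSset
  have hempmeas : ∀ n r, Measurable (fun ω => empAvg Zs T r (F n) ω) := by
    intro n r
    unfold empAvg
    exact measurable_const.mul (Finset.measurable_sum _ fun t _ => (hFmeas n).comp (hZmeas t))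
  have hmeasS : ∀ j, MeasurableSet (Sset j) := by
    intro j
    have e : Sset j = ⋂ n,
        {ω | |(∫ z, F n z ∂(P T)) - empAvg Zs T (2^j) (F n) ω| ≤ bfun C1 C2 δ j} := by
      ext ω
      simp only [hSset, Set.mem_setOf_eq, Set.mem_iInter, dPE]
      exact ciSup_le_iff (hbddP _ ω)
    rw [e]
    exact MeasurableSet.iInter fun n =>
      measurableSet_le ((measurable_const.sub (hempmeas n _)).abs) measurable_const
  have hScompl : ∀ j, j ≤ K → μ (Sset j)ᶜ ≤ ENNReal.ofReal (delf δ j) := by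
    intro j hj
    have h2T : 2^j ≤ T := (Nat.le_log_iff_pow_le one_lt_two (by omega)).1 hj
    have hle : ENNReal.ofReal (1 - delf δ j) ≤ μ (Sset j) :=
      hUC' (2^j) (Nat.one_le_pow _ _ (by norm_num)) h2T (delf δ j)
        (delf_pos hδ0 j) (delf_lt_one hδ0 hδ1 j)
    have e1 : μ (Sset j)ᶜ = 1 - μ (Sset j) := by
      rw [measure_compl (hmeasS j) (measure_ne_top μ _), measure_univ]
    rw [e1]
    calc 1 - μ (Sset j) ≤ 1 - ENNReal.ofReal (1 - delf δ j) := tsub_le_tsub_left hle 1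
      _ = ENNReal.ofReal (delf δ j) := by
          rw [← ENNReal.ofReal_one,
            ← ENNReal.ofReal_sub 1 (by linarith [delf_lt_one hδ0 hδ1 j] : (0:ℝ) ≤ 1 - delf δ j)]
          congr 1
          ring
  set G : Set Ω := ⋂ j ∈ Finset.range (K+1), Sset j with hG
  have hGmeas : MeasurableSet G :=
    MeasurableSet.biInter (Set.to_countable _) (fun j _ => hmeasS j)
  have hsum : ∑ j ∈ Finset.range (K+1), delf δ j ≤ δ := by
    have hbs := sum_basel (K+1)
    have hπ2 : (0:ℝ) < Real.pi^2 := by nlinarith [Real.pi_gt_three]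
    have e : ∑ j ∈ Finset.range (K+1), delf δ j
        = (6*δ/Real.pi^2) * ∑ j ∈ Finset.range (K+1), (1:ℝ)/((j:ℝ)+1)^2 := by
      rw [Finset.mul_sum]
      refine Finset.sum_congr rfl fun j _ => ?_
      have hj : ((j:ℝ)+1) ≠ 0 := by positivity
      rw [delf]
      field_simp
    rw [e]
    have h2 : (6*δ/Real.pi^2) * ∑ j ∈ Finset.range (K+1), (1:ℝ)/((j:ℝ)+1)^2
        ≤ (6*δ/Real.pi^2) * (Real.pi^2/6) :=
      mul_le_mul_of_nonneg_left hbs (by positivity)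
    have h3 : (6*δ/Real.pi^2) * (Real.pi^2/6) = δ := by
      field_simp
    linarith
  have hGc : μ Gᶜ ≤ ENNReal.ofReal δ := by
    have e : Gᶜ = ⋃ j ∈ Finset.range (K+1), (Sset j)ᶜ := by
      rw [hG]; simp [Set.compl_iInter]
    rw [e]
    calc μ (⋃ j ∈ Finset.range (K+1), (Sset j)ᶜ)
        ≤ ∑ j ∈ Finset.range (K+1), μ (Sset j)ᶜ := measure_biUnion_finset_le _ _
      _ ≤ ∑ j ∈ Finset.range (K+1), ENNReal.ofReal (delf δ j) :=
          Finset.sum_le_sum fun j hj => hScompl j (by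
            rw [Finset.mem_range] at hj; omega)
      _ = ENNReal.ofReal (∑ j ∈ Finset.range (K+1), delf δ j) :=
          (ENNReal.ofReal_sum_of_nonneg fun j _ => (delf_pos hδ0 j).le).symm
      _ ≤ ENNReal.ofReal δ := ENNReal.ofReal_le_ofReal hsum
  have hsubset : G ⊆ {ω | dPE F (P T) Zs T (2 ^ jhat ω) ω ≤ 462 * Sfun C1 C2 (T : ℕ) δ} := by
    intro ω hω
    rw [hG, Set.mem_iInter₂] at hω
    have hdP : ∀ j, 2^j ≤ T → dPE F (P T) Zs T (2^j) ω ≤ Sfun C1 C2 ((2^j : ℕ) : ℝ) δ := by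
      intro j hj
      have hjK : j ≤ K := (Nat.le_log_iff_pow_le one_lt_two (by omega)).2 hj
      have h1 : dPE F (P T) Zs T (2^j) ω ≤ bfun C1 C2 δ j :=
        hω j (Finset.mem_range.2 (by omega))
      exact h1.trans (bfun_le_Sfun hC2 hδ0 hδ1 j)
    obtain ⟨hstop, hmin⟩ := hjhat ω
    have h2T : 2 ^ jhat ω ≤ T := by
      rcases Nat.eq_zero_or_pos (jhat ω) with h0 | h0
      · rw [h0]; simpa using hT
      · have hns := hmin (jhat ω - 1) (by omega)
        rw [stopCond] at hns
        push_neg at hns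
        have h5 := hns.1
        rwa [show jhat ω - 1 + 1 = jhat ω from by omega] at h5
    have h2T1 : T < 2 ^ (jhat ω + 1) := by
      by_contra hcon
      push_neg at hcon
      have hd1 := hdP (jhat ω) h2T
      have hd2 := hdP (jhat ω + 1) hcon
      have hEE : dEE F Zs T (2 ^ jhat ω) (2 ^ (jhat ω + 1)) ω
          ≤ dPE F (P T) Zs T (2 ^ jhat ω) ω + dPE F (P T) Zs T (2 ^ (jhat ω + 1)) ω := by
        unfold dEE dPE
        refine ciSup_le fun n => ?_
        calc |empAvg Zs T (2 ^ jhat ω) (F n) ω - empAvg Zs T (2 ^ (jhat ω + 1)) (F n) ω|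
            ≤ |empAvg Zs T (2 ^ jhat ω) (F n) ω - (∫ z, F n z ∂(P T))|
              + |(∫ z, F n z ∂(P T)) - empAvg Zs T (2 ^ (jhat ω + 1)) (F n) ω| :=
              abs_sub_le _ _ _
          _ = |(∫ z, F n z ∂(P T)) - empAvg Zs T (2 ^ jhat ω) (F n) ω|
              + |(∫ z, F n z ∂(P T)) - empAvg Zs T (2 ^ (jhat ω + 1)) (F n) ω| := by
              rw [abs_sub_comm]
          _ ≤ _ := add_le_add (le_ciSup (hbddP _ ω) n) (le_ciSup (hbddP _ ω) n)
      rw [stopCond] at hstop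
      rcases hstop with h | h
      · omega
      · have hS2 := Sfun_pow_succ_le hC1 hC2 δ (jhat ω)
        have hSnn := Sfun_nonneg hC1 hC2 ((2 ^ jhat ω : ℕ) : ℝ) δ
        linarith
    show dPE F (P T) Zs T (2 ^ jhat ω) ω ≤ 462 * Sfun C1 C2 (T : ℕ) δ
    exact (hdP (jhat ω) h2T).trans (Sfun_final hC1 hC2 hT h2T h2T1)
  calc ENNReal.ofReal (1 - δ) = 1 - ENNReal.ofReal δ := by
        rw [ENNReal.ofReal_sub 1 hδ0.le, ENNReal.ofReal_one]
    _ ≤ 1 - μ Gᶜ := tsub_le_tsub_left hGc 1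
    _ = μ G := by
        rw [measure_compl hGmeas (measure_ne_top μ _), measure_univ,
          ENNReal.sub_sub_cancel ENNReal.one_ne_top prob_le_one]
    _ ≤ _ := measure_mono hsubset
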